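/- Let w be a 2D word of size (m,n) with m,n ≥ 2, and let BOR(w) be the set of all borders of w. If w is a 2D palindrome, then 2 ≤ |BOR(w)| ≤ mn. If w is an HV-palindrome, then 4 ≤ |BOR(w)| ≤ mn. -/

import Mathlib

/-- A finite 2D word over `A`: a pair of dimensions together with a matrix of letters. -/
def Word2D (A : Type*) := (k : ℕ) × (l : ℕ) × (Fin k → Fin l → A)

/-- A 2D word `w` is a 2D palindrome if it equals its reverse. -/
def IsPal2D {A : Type*} {m n : ℕ} (w : Fin m → Fin n → A) : Prop :=
  ∀ i j, w i j = w i.rev j.rev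

/-- A 2D word is an HV-palindrome if every row and every column is a palindrome. -/
def IsHVPal {A : Type*} {m n : ℕ} (w : Fin m → Fin n → A) : Prop :=
  (∀ i j, w i j = w i j.rev) ∧ (∀ i j, w i j = w i.rev j)

/-- `v` is a border of `w`: it is nonempty and occurs both as the prefix (top-left corner)
and as the suffix (bottom-right corner) of `w`. -/
def IsBorder {A : Type*} {i j m n : ℕ} (v : Fin i → Fin j → A)
    (w : Fin m → Fin n → A) : Prop :=
  0 < i ∧ 0 < j ∧ ∃ (hi : i ≤ m) (hj : j ≤ n),
    (∀ k l, v k l = w (Fin.castLE hi k) (Fin.castLE hj l)) ∧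
    (∀ (k : Fin i) (l : Fin j),
      v k l = w ⟨m - i + k, by have := k.isLt; omega⟩
                ⟨n - j + l, by have := l.isLt; omega⟩)

/-- The set of all borders of `w`, as distinct 2D words (of all sizes). -/
def BOR {A : Type*} {m n : ℕ} (w : Fin m → Fin n → A) : Set (Word2D A) :=
  {p | IsBorder p.2.2 w}

/-- for `w` of size `(m,n)`, `m,n ≥ 2`: if `w` is a 2D palindrome then
`2 ≤ |BOR(w)| ≤ mn`; if `w` is an HV-palindrome then `4 ≤ |BOR(w)| ≤ mn`. -/
theorem stmt_7 {A : Type*} (m n : ℕ) (hm : 2 ≤ m) (hn : 2 ≤ n)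
    (w : Fin m → Fin n → A) :
    (IsPal2D w → 2 ≤ (BOR w).ncard ∧ (BOR w).ncard ≤ m * n) ∧
    (IsHVPal w → 4 ≤ (BOR w).ncard ∧ (BOR w).ncard ≤ m * n) := by
  classical
  have hm0 : 0 < m := by omega
  have hn0 : 0 < n := by omega
  have wext : ∀ (p q : Fin m) (r s : Fin n), (p : ℕ) = q → (r : ℕ) = s → w p r = w q s :=
    fun p q r s h1 h2 => by rw [Fin.ext h1, Fin.ext h2]
  -- upper bound & finiteness
  have hmaps : ∀ p ∈ BOR w, (p.1, p.2.1) ∈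
      (↑(Finset.Icc 1 m ×ˢ Finset.Icc 1 n) : Set (ℕ × ℕ)) := by
    rintro p ⟨hi0, hj0, hi, hj, -, -⟩
    simp only [Finset.coe_product, Set.mem_prod, Finset.mem_coe, Finset.mem_Icc]
    omega
  have hinj : Set.InjOn (fun p : Word2D A => (p.1, p.2.1)) (BOR w) := by
    rintro ⟨i, j, v⟩ ⟨-, -, hi, hj, hpre, -⟩ ⟨i', j', v'⟩ ⟨-, -, hi', hj', hpre', -⟩ h
    simp only [Prod.mk.injEq] at h
    obtain ⟨rfl, rfl⟩ := h
    have : v = v' := funext fun k => funext fun l => (hpre k l).trans (hpre' k l).symm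
    rw [this]
  have hfin : (BOR w).Finite :=
    Set.Finite.of_finite_image
      (((Finset.Icc 1 m ×ˢ Finset.Icc 1 n).finite_toSet).subset
        (Set.image_subset_iff.mpr hmaps)) hinj
  have hub : (BOR w).ncard ≤ m * n := by
    calc (BOR w).ncard ≤ (↑(Finset.Icc 1 m ×ˢ Finset.Icc 1 n) : Set (ℕ × ℕ)).ncard :=
          Set.ncard_le_ncard_of_injOn _ hmaps hinj (Finset.finite_toSet _)
      _ = m * n := by
          rw [Set.ncard_coe_finset, Finset.card_product]
          simp [Nat.card_Icc]
  -- w is always a border of itself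
  have hdmem : (⟨m, n, w⟩ : Word2D A) ∈ BOR w := by
    show IsBorder w w
    refine ⟨hm0, hn0, le_refl m, le_refl n, fun k l => ?_, fun k l => ?_⟩
    · exact wext _ _ _ _ (by simp) (by simp)
    · exact wext _ _ _ _ (by simp) (by simp)
  -- distinctness of the four candidates (as needed)
  have hab : (⟨1, 1, fun _ _ => w ⟨0, hm0⟩ ⟨0, hn0⟩⟩ : Word2D A) ≠
      ⟨1, n, fun _ l => w ⟨0, hm0⟩ l⟩ := fun h => by
    have := congrArg (fun p : Word2D A => p.2.1) h; simp at this; omega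
  have hac : (⟨1, 1, fun _ _ => w ⟨0, hm0⟩ ⟨0, hn0⟩⟩ : Word2D A) ≠
      ⟨m, 1, fun k _ => w k ⟨0, hn0⟩⟩ := fun h => by
    have := congrArg (fun p : Word2D A => p.1) h; simp at this; omega
  have had : (⟨1, 1, fun _ _ => w ⟨0, hm0⟩ ⟨0, hn0⟩⟩ : Word2D A) ≠ ⟨m, n, w⟩ := fun h => by
    have := congrArg (fun p : Word2D A => p.1) h; simp at this; omega
  have hbc : (⟨1, n, fun _ l => w ⟨0, hm0⟩ l⟩ : Word2D A) ≠
      ⟨m, 1, fun k _ => w k ⟨0, hn0⟩⟩ := fun h => by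
    have := congrArg (fun p : Word2D A => p.1) h; simp at this; omega
  have hbd : (⟨1, n, fun _ l => w ⟨0, hm0⟩ l⟩ : Word2D A) ≠ ⟨m, n, w⟩ := fun h => by
    have := congrArg (fun p : Word2D A => p.1) h; simp at this; omega
  have hcd : (⟨m, 1, fun k _ => w k ⟨0, hn0⟩⟩ : Word2D A) ≠ ⟨m, n, w⟩ := fun h => by
    have := congrArg (fun p : Word2D A => p.2.1) h; simp at this; omega
  -- corner membership given the corner identity
  have hcorner : w ⟨0, hm0⟩ ⟨0, hn0⟩ = w ⟨m - 1, by omega⟩ ⟨n - 1, by omega⟩ →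
      (⟨1, 1, fun _ _ => w ⟨0, hm0⟩ ⟨0, hn0⟩⟩ : Word2D A) ∈ BOR w := by
    intro key
    show IsBorder (fun (_ : Fin 1) (_ : Fin 1) => w ⟨0, hm0⟩ ⟨0, hn0⟩) w
    refine ⟨one_pos, one_pos, by omega, by omega, fun k l => ?_, fun k l => ?_⟩
    · exact wext _ _ _ _ (by simp) (by simp)
    · show w ⟨0, hm0⟩ ⟨0, hn0⟩ = _
      rw [key]
      exact wext _ _ _ _ (by simp) (by simp)
  constructor
  · intro hpal
    refine ⟨?_, hub⟩
    have hamem := hcorner (by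
      rw [hpal ⟨0, hm0⟩ ⟨0, hn0⟩]
      exact wext _ _ _ _ (by simp [Fin.val_rev]) (by simp [Fin.val_rev]))
    calc 2 = ({⟨1, 1, fun _ _ => w ⟨0, hm0⟩ ⟨0, hn0⟩⟩, ⟨m, n, w⟩} : Set (Word2D A)).ncard :=
          (Set.ncard_pair had).symm
      _ ≤ (BOR w).ncard := Set.ncard_le_ncard (by
          intro x hx; rcases hx with rfl | rfl
          exacts [hamem, hdmem]) hfin
  · intro hv
    refine ⟨?_, hub⟩
    have hrow : ∀ (x : ℕ) (hx : x < m) (l : Fin n),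
        w ⟨x, hx⟩ l = w ⟨m - 1 - x, by omega⟩ l := by
      intro x hx l
      rw [hv.2 ⟨x, hx⟩ l]
      exact wext _ _ _ _ (by simp [Fin.val_rev]; omega) rfl
    have hcol : ∀ (k : Fin m) (y : ℕ) (hy : y < n),
        w k ⟨y, hy⟩ = w k ⟨n - 1 - y, by omega⟩ := by
      intro k y hy
      rw [hv.1 k ⟨y, hy⟩]
      exact wext _ _ _ _ rfl (by simp [Fin.val_rev]; omega)
    have hamem := hcorner (by
      rw [hrow 0 hm0 ⟨0, hn0⟩, hcol ⟨m - 1 - 0, by omega⟩ 0 hn0]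
      exact wext _ _ _ _ (by simp) (by simp))
    have hbmem : (⟨1, n, fun _ l => w ⟨0, hm0⟩ l⟩ : Word2D A) ∈ BOR w := by
      show IsBorder (fun (_ : Fin 1) (l : Fin n) => w ⟨0, hm0⟩ l) w
      refine ⟨one_pos, hn0, hm0, le_refl n, fun k l => ?_, fun k l => ?_⟩
      · exact wext _ _ _ _ (by simp) (by simp)
      · show w ⟨0, hm0⟩ l = _
        rw [hrow 0 hm0 l]
        exact wext _ _ _ _ (by simp) (by simp)
    have hcmem : (⟨m, 1, fun k _ => w k ⟨0, hn0⟩⟩ : Word2D A) ∈ BOR w := by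
      show IsBorder (fun (k : Fin m) (_ : Fin 1) => w k ⟨0, hn0⟩) w
      refine ⟨hm0, one_pos, le_refl m, hn0, fun k l => ?_, fun k l => ?_⟩
      · exact wext _ _ _ _ (by simp) (by simp)
      · show w k ⟨0, hn0⟩ = _
        rw [hcol k 0 hn0]
        exact wext _ _ _ _ (by simp) (by simp)
    have hcard : ({⟨1, 1, fun _ _ => w ⟨0, hm0⟩ ⟨0, hn0⟩⟩, ⟨1, n, fun _ l => w ⟨0, hm0⟩ l⟩,
        ⟨m, 1, fun k _ => w k ⟨0, hn0⟩⟩, ⟨m, n, w⟩} : Set (Word2D A)).ncard = 4 := by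
      erw [Set.ncard_insert_of_notMem ?h1 ?f1,
        Set.ncard_insert_of_notMem ?h2 ?f2,
        Set.ncard_pair hcd]
      case h1 =>
        rintro (h | h | h)
        exacts [hab h, hac h, had h]
      case h2 =>
        rintro (h | h)
        exacts [hbc h, hbd h]
      case f1 => exact ((Set.finite_singleton _).insert _).insert _
      case f2 => exact (Set.finite_singleton _).insert _
    calc 4 = ({⟨1, 1, fun _ _ => w ⟨0, hm0⟩ ⟨0, hn0⟩⟩, ⟨1, n, fun _ l => w ⟨0, hm0⟩ l⟩,
          ⟨m, 1, fun k _ => w k ⟨0, hn0⟩⟩, ⟨m, n, w⟩} : Set (Word2D A)).ncard := hcard.symm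
      _ ≤ (BOR w).ncard := Set.ncard_le_ncard (by
          intro x hx
          rcases hx with rfl | rfl | rfl | rfl
          exacts [hamem, hbmem, hcmem, hdmem]) hfin
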